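/- Let S ⊂ ℝ^k be a convex set with 0 ∈ S, let m ≥ 1 be an integer, and let φ : S → [0,∞) be a function such that φ^{1/m} is concave on S. Let μ be the measure on S with density φ with respect to k-dimensional Lebesgue measure. Then for every measurable set B ⊆ S and every λ ∈ [0,1], μ(λB) ≥ λ^{k+m}·μ(B), where λB = {λ·b : b ∈ B}. -/

import Mathlib

open Set MeasureTheory Pointwise

/-- Homogeneity-type estimate for measures with `m`-concave density: if `S ⊆ ℝ^k` is
convex with `0 ∈ S` and `φ : S → [0,∞)` has `φ^{1/m}` concave, then the measure
`μ = φ·vol_k` satisfies `μ(λB) ≥ λ^{k+m}·μ(B)` for every measurable `B ⊆ S` and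
every `λ ∈ [0,1]`. -/
theorem scaled_set_measure_lower_bound
    (k m : ℕ) (hm : 1 ≤ m)
    (S : Set (EuclideanSpace ℝ (Fin k)))
    (hS_conv : Convex ℝ S) (hS_zero : (0 : EuclideanSpace ℝ (Fin k)) ∈ S)
    (φ : EuclideanSpace ℝ (Fin k) → ℝ)
    (hφ_nonneg : ∀ u ∈ S, 0 ≤ φ u)
    (hφ_conc : ConcaveOn ℝ S (fun u => φ u ^ ((1 : ℝ) / m)))
    (B : Set (EuclideanSpace ℝ (Fin k))) (hB_sub : B ⊆ S) (hB_meas : MeasurableSet B)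
    (lam : ℝ) (hlam : lam ∈ Icc (0 : ℝ) 1) :
    ENNReal.ofReal (lam ^ (k + m)) * ∫⁻ u in B, ENNReal.ofReal (φ u) ≤
      ∫⁻ u in lam • B, ENNReal.ofReal (φ u) := by
  obtain ⟨hlam0, hlam1⟩ := hlam
  rcases eq_or_lt_of_le hlam0 with h0 | hpos
  · -- lam = 0
    have : lam ^ (k + m) = 0 := by
      rw [← h0]; exact zero_pow (by omega)
    simp [this]
  -- lam > 0
  have hlamne : lam ≠ 0 := ne_of_gt hpos
  set f : EuclideanSpace ℝ (Fin k) → ENNReal := fun u => ENNReal.ofReal (φ u) with hf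
  -- pointwise concavity bound: φ (lam • v) ≥ lam^m * φ v  for v ∈ S
  have hpt : ∀ v ∈ S, ENNReal.ofReal (lam ^ m) * f v ≤ f (lam • v) := by
    intro v hv
    rw [hf, ← ENNReal.ofReal_mul (by positivity)]
    apply ENNReal.ofReal_le_ofReal
    have hmem : lam • v ∈ S := by
      have := hS_conv hS_zero hv (by linarith : (0:ℝ) ≤ 1 - lam) hlam0 (by ring)
      simpa using this
    have hconc := hφ_conc.2 hS_zero hv (by linarith : (0:ℝ) ≤ 1 - lam) hlam0 (by ring)
    simp only [smul_zero, zero_add] at hconc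
    have h1 : lam * φ v ^ ((1:ℝ)/m) ≤ φ (lam • v) ^ ((1:ℝ)/m) := by
      have h0' : 0 ≤ (1 - lam) * φ 0 ^ ((1:ℝ)/m) := by
        have := Real.rpow_nonneg (hφ_nonneg 0 hS_zero) ((1:ℝ)/m)
        nlinarith
      calc lam * φ v ^ ((1:ℝ)/m)
          ≤ (1 - lam) * φ 0 ^ ((1:ℝ)/m) + lam * φ v ^ ((1:ℝ)/m) := by linarith
        _ ≤ _ := hconc
    have hmne : m ≠ 0 := by omega
    calc lam ^ m * φ v = (lam * φ v ^ ((1:ℝ)/m)) ^ m := by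
          rw [mul_pow, one_div, Real.rpow_inv_natCast_pow (hφ_nonneg v hv) hmne]
      _ ≤ (φ (lam • v) ^ ((1:ℝ)/m)) ^ m := by
          exact pow_le_pow_left₀ (mul_nonneg hlam0 (Real.rpow_nonneg (hφ_nonneg v hv) _)) h1 m
      _ = φ (lam • v) := by
          rw [one_div, Real.rpow_inv_natCast_pow (hφ_nonneg _ hmem) hmne]
  -- change of variables via the measurable equivalence v ↦ lam • v
  set e : EuclideanSpace ℝ (Fin k) ≃ᵐ EuclideanSpace ℝ (Fin k) :=
    MeasurableEquiv.smul₀ lam hlamne with he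
  have hmap : Measure.map (lam • ·) (volume : Measure (EuclideanSpace ℝ (Fin k)))
      = ENNReal.ofReal |(lam ^ Module.finrank ℝ (EuclideanSpace ℝ (Fin k)))⁻¹| • volume :=
    Measure.map_addHaar_smul volume hlamne
  have hrank : Module.finrank ℝ (EuclideanSpace ℝ (Fin k)) = k := finrank_euclideanSpace_fin
  have key : ∫⁻ v in B, f (lam • v) = ENNReal.ofReal ((lam ^ k)⁻¹) * ∫⁻ u in lam • B, f u := by
    have h1 : ∫⁻ u, (lam • B).indicator f u ∂(Measure.map (lam • ·) volume)
        = ∫⁻ v, (lam • B).indicator f (lam • v) := by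
      exact MeasureTheory.lintegral_map_equiv ((lam • B).indicator f) e
    rw [hmap, hrank] at h1
    have h2 : ∀ v, (lam • B).indicator f (lam • v) = B.indicator (fun v => f (lam • v)) v := by
      intro v
      by_cases hv : v ∈ B
      · rw [indicator_of_mem hv, indicator_of_mem (smul_mem_smul_set hv)]
      · rw [indicator_of_notMem hv, indicator_of_notMem]
        intro hc
        exact hv ((smul_mem_smul_set_iff₀ hlamne B v).mp hc)
    simp only [h2] at h1
    rw [lintegral_indicator hB_meas] at h1
    rw [lintegral_smul_measure, lintegral_indicator (hB_meas.const_smul₀ lam)] at h1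
    rw [← h1, abs_of_nonneg (show (0:ℝ) ≤ (lam ^ k)⁻¹ by positivity)]
    rfl
  -- combine
  have hBle : ENNReal.ofReal (lam ^ m) * ∫⁻ u in B, f u ≤ ∫⁻ v in B, f (lam • v) := by
    rw [← lintegral_const_mul' _ _ ENNReal.ofReal_ne_top]
    refine lintegral_mono_ae ?_
    filter_upwards [ae_restrict_mem hB_meas] with v hv
    exact hpt v (hB_sub hv)
  rw [key] at hBle
  have hk : ENNReal.ofReal (lam ^ k) ≠ 0 := by
    simp [ENNReal.ofReal_eq_zero, not_le]; positivity
  calc ENNReal.ofReal (lam ^ (k + m)) * ∫⁻ u in B, f u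
      = ENNReal.ofReal (lam ^ k) * (ENNReal.ofReal (lam ^ m) * ∫⁻ u in B, f u) := by
        rw [← mul_assoc, ← ENNReal.ofReal_mul (by positivity), ← pow_add]
    _ ≤ ENNReal.ofReal (lam ^ k) * (ENNReal.ofReal ((lam ^ k)⁻¹) * ∫⁻ u in lam • B, f u) := by
        exact mul_le_mul_right hBle _
    _ = ∫⁻ u in lam • B, f u := by
        rw [← mul_assoc, ← ENNReal.ofReal_mul (by positivity),
          mul_inv_cancel₀ (by positivity), ENNReal.ofReal_one, one_mul]
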